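/- For every integer a ≥ 3, the genus of T(a) equals (a/5)·(l_a + l_{a−2}) + 2, and the Frobenius number of T(a) equals 2·l_a + 1 if a ∈ {3, 4, 5}, and equals ⌈(a − 1)/2⌉·l_a − 1 if a ≥ 6. -/

import Mathlib

/-- The Lucas sequence: l 0 = 2, l 1 = 1, l (n+2) = l (n+1) + l n. -/
def lucas : ℕ → ℕ
  | 0 => 2
  | 1 => 1
  | n + 2 => lucas (n + 1) + lucas n

/-- The modified (monotone) Lucas sequence: l̃ 0 = 1, l̃ 1 = 2, l̃ n = l n for n ≥ 2. -/
def ltil : ℕ → ℕ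
  | 0 => 1
  | 1 => 2
  | n + 2 => lucas (n + 2)

/-- β x : minimal number of summands in a representation of x as a sum of
modified Lucas numbers (with repetitions allowed). -/
noncomputable def beta (x : ℕ) : ℕ :=
  sInf {s : ℕ | ∃ k : ℕ, ∃ b : ℕ → ℕ,
    x = ∑ i ∈ Finset.range (k + 1), b i * ltil i ∧ s = ∑ i ∈ Finset.range (k + 1), b i}

/-- γ x : the greatest k with l̃ k ≤ x (for x ≥ 1). -/
noncomputable def gamma (x : ℕ) : ℕ := sSup {k : ℕ | ltil k ≤ x}

/-- S a : the additive submonoid of ℕ generated by {l_a} ∪ {l_a + l_n : n ∈ ℕ}. -/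
def Sset (a : ℕ) : AddSubmonoid ℕ :=
  AddSubmonoid.closure ({lucas a} ∪ {x : ℕ | ∃ n : ℕ, x = lucas a + lucas n})

/-- T a : the additive submonoid of ℕ generated by {l_a + l_n : n ∈ ℕ}. -/
def Tset (a : ℕ) : AddSubmonoid ℕ :=
  AddSubmonoid.closure {x : ℕ | ∃ n : ℕ, x = lucas a + lucas n}


lemma lucas_add_two (n : ℕ) : lucas (n+2) = lucas (n+1) + lucas n := rfl

lemma lucas_pos (n : ℕ) : 1 ≤ lucas n := by
  induction n using Nat.strong_induction_on with
  | _ n ih =>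
    match n with
    | 0 => exact one_le_two
    | 1 => exact le_refl 1
    | (m+2) =>
      have := ih (m+1) (by omega)
      rw [lucas_add_two]; omega

lemma lucas_lt_succ {n : ℕ} (hn : 1 ≤ n) : lucas n < lucas (n+1) := by
  match n, hn with
  | 1, _ => decide
  | (m+2), _ =>
    show lucas (m+2) < lucas (m+3)
    have h : lucas (m+3) = lucas (m+2) + lucas (m+1) := rfl
    have := lucas_pos (m+1)
    omega

lemma lucas_strictMonoOn : ∀ m n, 1 ≤ m → m < n → lucas m < lucas n := by
  intro m n hm hlt
  induction n with
  | zero => omega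
  | succ k ih =>
    rcases Nat.lt_succ_iff_lt_or_eq.mp hlt with h | h
    · exact lt_trans (ih h) (lucas_lt_succ (by omega))
    · subst h; exact lucas_lt_succ hm

lemma lucas_le_of_le {m n : ℕ} (hm : 1 ≤ m) (h : m ≤ n) : lucas m ≤ lucas n := by
  rcases eq_or_lt_of_le h with rfl | h
  · exact le_refl _
  · exact le_of_lt (lucas_strictMonoOn m n hm h)

lemma ltil_zero : ltil 0 = 1 := rfl
lemma ltil_one : ltil 1 = 2 := rfl
lemma ltil_eq_lucas {n : ℕ} (h : 2 ≤ n) : ltil n = lucas n := by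
  match n, h with
  | (m+2), _ => rfl

lemma ltil_pos (n : ℕ) : 1 ≤ ltil n := by
  match n with
  | 0 => exact le_refl 1
  | 1 => exact one_le_two
  | (m+2) => exact lucas_pos _

lemma ltil_lt_succ (n : ℕ) : ltil n < ltil (n+1) := by
  match n with
  | 0 => decide
  | 1 => decide
  | (m+2) => exact lucas_lt_succ (by omega)

lemma ltil_strictMono : StrictMono ltil := strictMono_nat_of_lt_succ ltil_lt_succ

lemma ltil_lt_self_add_one (n : ℕ) : n + 1 ≤ ltil n := by
  induction n with
  | zero => decide
  | succ k ih => have := ltil_lt_succ k; omega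

/-- recurrence for ltil, valid except at k = 1 -/
lemma ltil_rec {k : ℕ} (h : k ≠ 1) : ltil (k+2) = ltil (k+1) + ltil k := by
  match k, h with
  | 0, _ => decide
  | (m+2), _ =>
    show lucas (m+4) = lucas (m+3) + lucas (m+2)
    exact lucas_add_two (m+2)

/-- every ltil value is a lucas value and conversely -/
lemma ltil_is_lucas (i : ℕ) : ∃ n, ltil i = lucas n := by
  match i with
  | 0 => exact ⟨1, rfl⟩
  | 1 => exact ⟨0, rfl⟩
  | (m+2) => exact ⟨m+2, rfl⟩

lemma lucas_is_ltil (n : ℕ) : ∃ i, lucas n = ltil i := by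
  match n with
  | 0 => exact ⟨1, rfl⟩
  | 1 => exact ⟨0, rfl⟩
  | (m+2) => exact ⟨m+2, rfl⟩

/-- the top index: greatest k with ltil k ≤ y -/
def top (y : ℕ) : ℕ := Nat.findGreatest (fun k => ltil k ≤ y) y

lemma ltil_top_le {y : ℕ} (hy : 1 ≤ y) : ltil (top y) ≤ y :=
  Nat.findGreatest_spec (P := fun k => ltil k ≤ y) (Nat.zero_le y) hy

lemma lt_ltil_top_succ (y : ℕ) : y < ltil (top y + 1) := by
  by_contra hc
  push_neg at hc
  have hle : top y + 1 ≤ y := by have := ltil_lt_self_add_one (top y + 1); omega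
  exact Nat.findGreatest_is_greatest (lt_add_one _) hle hc

lemma top_ge {k y : ℕ} (h : ltil k ≤ y) : k ≤ top y :=
  Nat.le_findGreatest (le_trans (by have := ltil_lt_self_add_one k; omega) h) h

lemma top_eq {k y : ℕ} (h1 : ltil k ≤ y) (h2 : y < ltil (k+1)) : top y = k := by
  have h3 := top_ge h1
  by_contra hne
  have : k + 1 ≤ top y := by omega
  have := le_trans (ltil_strictMono.monotone this) (ltil_top_le (le_trans (ltil_pos k) h1))
  omega

/-- greedy count with fuel -/
def Zf : ℕ → ℕ → ℕ
  | 0, _ => 0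
  | (f+1), y => if y = 0 then 0 else 1 + Zf f (y - ltil (top y))

def Z (y : ℕ) : ℕ := Zf y y

lemma Zf_zero (f : ℕ) : Zf f 0 = 0 := by cases f <;> rfl

lemma Zf_congr : ∀ y f g, y ≤ f → y ≤ g → Zf f y = Zf g y := by
  intro y
  induction y using Nat.strong_induction_on with
  | _ y ih =>
    intro f g hf hg
    cases y with
    | zero => rw [Zf_zero, Zf_zero]
    | succ m =>
      match f, g, hf, hg with
      | (f'+1), (g'+1), hf, hg =>
        simp only [Zf, Nat.succ_ne_zero, if_false]
        have h1 : ltil (top (m+1)) ≥ 1 := ltil_pos _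
        rw [ih ((m+1) - ltil (top (m+1))) (by omega) f' g' (by omega) (by omega)]

lemma Z_zero : Z 0 = 0 := rfl

lemma Z_eq_succ {y : ℕ} (hy : 1 ≤ y) : Z y = 1 + Z (y - ltil (top y)) := by
  unfold Z
  match y, hy with
  | (m+1), _ =>
    simp only [Zf, Nat.succ_ne_zero, if_false]
    have h1 : ltil (top (m+1)) ≥ 1 := ltil_pos _
    exact congrArg (1 + ·) (Zf_congr (m + 1 - ltil (top (m+1))) m _ (by omega) (by omega))

lemma Z_interval {k z : ℕ} (h1 : ltil k ≤ z) (h2 : z < ltil (k+1)) :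
    Z z = 1 + Z (z - ltil k) := by
  have hz : 1 ≤ z := le_trans (ltil_pos k) h1
  rw [Z_eq_succ hz, top_eq h1 h2]

lemma Z_eq_zero_iff {y : ℕ} : Z y = 0 ↔ y = 0 := by
  constructor
  · intro h
    by_contra hy
    rw [Z_eq_succ (by omega)] at h
    omega
  · rintro rfl; rfl

lemma Z_ltil (k : ℕ) : Z (ltil k) = 1 := by
  rw [Z_interval (le_refl _) (ltil_lt_succ k), Nat.sub_self, Z_zero]

lemma Z_lucas (n : ℕ) : Z (lucas n) = 1 := by
  obtain ⟨i, hi⟩ := lucas_is_ltil n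
  rw [hi, Z_ltil]

lemma Z_le_self (y : ℕ) : Z y ≤ y := by
  induction y using Nat.strong_induction_on with
  | _ y ih =>
    rcases Nat.eq_zero_or_pos y with rfl | hy
    · simp [Z_zero]
    · rw [Z_eq_succ hy]
      have h1 : 1 ≤ ltil (top y) := ltil_pos _
      have h2 : ltil (top y) ≤ y := ltil_top_le hy
      have := ih (y - ltil (top y)) (by omega)
      omega

lemma ltil_congr {p q : ℕ} (h : p = q) : ltil p = ltil q := congrArg ltil h

lemma P_lemma : ∀ t, ∀ i < t, ∀ α < ltil i,
    (∀ j, ltil j ≤ α → Z α ≤ 1 + Z (α - ltil j)) →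
    Z α ≤ Z (α + ltil t - ltil i) := by
  intro t
  induction t using Nat.strong_induction_on with
  | _ t ih =>
    intro i hi α hα hK
    by_cases ht : t ≤ 5
    · clear hK ih
      interval_cases t <;> interval_cases i <;> revert α <;> decide
    · push_neg at ht
      have hrec : ∀ k, 2 ≤ k → ltil (k+2) = ltil (k+1) + ltil k := fun k hk => ltil_rec (by omega)
      rcases Nat.exists_eq_add_of_le (show 6 ≤ t by omega) with ⟨s, rfl⟩
      -- normalized recurrences
      have h1 : ltil (6+s) = ltil (5+s) + ltil (4+s) := by
        have := hrec (4+s) (by omega)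
        rwa [ltil_congr (show 4+s+2 = 6+s by omega), ltil_congr (show 4+s+1 = 5+s by omega)] at this
      have h2 : ltil (5+s) = ltil (4+s) + ltil (3+s) := by
        have := hrec (3+s) (by omega)
        rwa [ltil_congr (show 3+s+2 = 5+s by omega), ltil_congr (show 3+s+1 = 4+s by omega)] at this
      have h3 : ltil (4+s) = ltil (3+s) + ltil (2+s) := by
        have := hrec (2+s) (by omega)
        rwa [ltil_congr (show 2+s+2 = 4+s by omega), ltil_congr (show 2+s+1 = 3+s by omega)] at this
      have hipos := ltil_pos i
      rcases Nat.lt_or_ge i (5 + s) with hi2 | hi2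
      · rcases Nat.lt_or_ge i (4 + s) with hi3 | hi3
        · -- i ≤ t-3 : one greedy step then recurse at t-2
          have hle : ltil i ≤ ltil (3+s) := ltil_strictMono.monotone (by omega)
          have hwlow : ltil (5+s) ≤ α + ltil (6+s) - ltil i := by omega
          have hwhigh : α + ltil (6+s) - ltil i < ltil (5+s+1) := by
            rw [ltil_congr (show 5+s+1 = 6+s by omega)]; omega
          rw [Z_interval hwlow hwhigh]
          have heq : α + ltil (6+s) - ltil i - ltil (5+s) = α + ltil (4+s) - ltil i := by omega
          rw [heq]
          have := ih (4+s) (by omega) i (by omega) α hα hK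
          omega
        · -- i = t-2
          have hieq : i = 4 + s := by omega
          subst hieq
          have hwlow : ltil (5+s) ≤ α + ltil (6+s) - ltil (4+s) := by omega
          have hwhigh : α + ltil (6+s) - ltil (4+s) < ltil (5+s+1) := by
            rw [ltil_congr (show 5+s+1 = 6+s by omega)]; omega
          rw [Z_interval hwlow hwhigh]
          have heq : α + ltil (6+s) - ltil (4+s) - ltil (5+s) = α := by omega
          rw [heq]; omega
      · -- i = t-1
        have hieq : i = 5 + s := by omega
        subst hieq
        have heqw : α + ltil (6+s) - ltil (5+s) = α + ltil (4+s) := by omega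
        rw [heqw]
        rcases Nat.lt_or_ge (α + ltil (4+s)) (ltil (5+s)) with hw | hw
        · have hw' : α + ltil (4+s) < ltil (4+s+1) := by
            rw [ltil_congr (show 4+s+1 = 5+s by omega)]; omega
          rw [Z_interval (by omega : ltil (4+s) ≤ α + ltil (4+s)) hw']
          have heq : α + ltil (4+s) - ltil (4+s) = α := by omega
          rw [heq]; omega
        · have hwhigh : α + ltil (4+s) < ltil (5+s+1) := by
            rw [ltil_congr (show 5+s+1 = 6+s by omega)]; omega
          rw [Z_interval hw hwhigh]
          have heq : α + ltil (4+s) - ltil (5+s) = α - ltil (3+s) := by omega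
          rw [heq]
          have hKa := hK (3+s) (by omega)
          omega

/-- Key lemma: removing any ltil part from y costs at most one greedy step. -/
lemma K_lemma : ∀ y, ∀ j, ltil j ≤ y → Z y ≤ 1 + Z (y - ltil j) := by
  intro y
  induction y using Nat.strong_induction_on with
  | _ y ihy =>
    intro j hj
    have hy : 1 ≤ y := le_trans (ltil_pos j) hj
    set t := top y with htdef
    have h1 : ltil t ≤ y := ltil_top_le hy
    have h2 : y < ltil (t+1) := lt_ltil_top_succ y
    have hZy : Z y = 1 + Z (y - ltil t) := Z_eq_succ hy
    rcases Nat.lt_or_ge j (t+1) with hjt | hjt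
    · rcases Nat.eq_or_lt_of_le (show j ≤ t by omega) with rfl | hjlt
      · omega
      · have hvu : ltil j < ltil t := ltil_strictMono hjlt
        rcases Nat.lt_or_ge (y - ltil j) (ltil t) with hA | hA
        · -- case B : use P_lemma
          have hα : y - ltil t < ltil j := by omega
          have hKα : ∀ j', ltil j' ≤ y - ltil t → Z (y - ltil t) ≤ 1 + Z (y - ltil t - ltil j') :=
            fun j' hj' => ihy (y - ltil t) (by have := ltil_pos t; omega) j' hj'
          have hP := P_lemma t j hjlt (y - ltil t) hα hKα
          have heq : y - ltil t + ltil t - ltil j = y - ltil j := by omega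
          rw [heq] at hP
          omega
        · -- case A
          have hZyv : Z (y - ltil j) = 1 + Z (y - ltil j - ltil t) := by
            have := ltil_pos j
            exact Z_interval hA (by omega)
          have hIH : Z (y - ltil t) ≤ 1 + Z (y - ltil t - ltil j) :=
            ihy (y - ltil t) (by have := ltil_pos t; omega) j (by omega)
          rw [show y - ltil t - ltil j = y - ltil j - ltil t by omega] at hIH
          omega
    · have := ltil_strictMono.monotone hjt
      omega

/-- sums of exactly m Lucas numbers -/
def RepM (m w : ℕ) : Prop :=
  ∃ M : Multiset ℕ, Multiset.card M = m ∧ M.sum = w ∧ ∀ v ∈ M, ∃ n, v = lucas n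

lemma RepM_zero : RepM 0 0 := ⟨0, by simp⟩

lemma RepM_lucas (n : ℕ) : RepM 1 (lucas n) := ⟨{lucas n}, by simp, by simp, by simp⟩

lemma RepM_add {m₁ w₁ m₂ w₂ : ℕ} (h₁ : RepM m₁ w₁) (h₂ : RepM m₂ w₂) :
    RepM (m₁ + m₂) (w₁ + w₂) := by
  obtain ⟨M₁, hc₁, hs₁, hl₁⟩ := h₁
  obtain ⟨M₂, hc₂, hs₂, hl₂⟩ := h₂
  refine ⟨M₁ + M₂, by simp [hc₁, hc₂], by simp [hs₁, hs₂], ?_⟩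
  intro v hv
  rcases Multiset.mem_add.mp hv with h | h
  · exact hl₁ v h
  · exact hl₂ v h

lemma RepM_le {m w : ℕ} (h : RepM m w) : m ≤ w := by
  obtain ⟨M, hc, hs, hl⟩ := h
  subst hc hs
  calc Multiset.card M = (M.map (fun _ => 1)).sum := by simp
  _ ≤ (M.map id).sum := by
      apply Multiset.sum_map_le_sum_map
      intro v hv
      obtain ⟨n, rfl⟩ := hl v hv
      exact lucas_pos n
  _ = M.sum := by simp

lemma Z_sum_le_card : ∀ (M : Multiset ℕ), (∀ v ∈ M, ∃ n, v = lucas n) →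
    Z M.sum ≤ Multiset.card M := by
  intro M
  induction M using Multiset.induction with
  | empty => simp [Z_zero]
  | cons v M ih =>
    intro hl
    obtain ⟨n, rfl⟩ := hl v (Multiset.mem_cons_self v M)
    have hM : ∀ u ∈ M, ∃ n, u = lucas n := fun u hu => hl u (Multiset.mem_cons_of_mem hu)
    obtain ⟨i, hi⟩ := lucas_is_ltil n
    simp only [Multiset.sum_cons, Multiset.card_cons]
    have hle : ltil i ≤ lucas n + M.sum := by rw [← hi]; omega
    have hK := K_lemma (lucas n + M.sum) i hle
    have heq : lucas n + M.sum - ltil i = M.sum := by rw [← hi]; omega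
    rw [heq] at hK
    have := ih hM
    omega

lemma Z_le_of_RepM {m w : ℕ} (h : RepM m w) : Z w ≤ m := by
  obtain ⟨M, hc, hs, hl⟩ := h
  subst hc hs
  exact Z_sum_le_card M hl

lemma RepM_of_Z (w : ℕ) : RepM (Z w) w := by
  induction w using Nat.strong_induction_on with
  | _ w ih =>
    rcases Nat.eq_zero_or_pos w with rfl | hw
    · rw [Z_zero]; exact RepM_zero
    · rw [Z_eq_succ hw]
      have h1 : ltil (top w) ≤ w := ltil_top_le hw
      have h2 : 1 ≤ ltil (top w) := ltil_pos _
      have hrec := ih (w - ltil (top w)) (by omega)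
      obtain ⟨n, hn⟩ := ltil_is_lucas (top w)
      have := RepM_add (RepM_lucas n) hrec
      rwa [← hn, Nat.add_sub_cancel' h1] at this

lemma Z_add_le (x y : ℕ) : Z (x + y) ≤ Z x + Z y :=
  Z_le_of_RepM (RepM_add (RepM_of_Z x) (RepM_of_Z y))

lemma lucas_split {n : ℕ} (h : 2 ≤ lucas n) : ∃ p q, lucas n = lucas p + lucas q := by
  match n with
  | 0 => exact ⟨1, 1, rfl⟩
  | 1 => simp [lucas] at h
  | 2 => exact ⟨0, 1, rfl⟩
  | 3 => exact ⟨2, 1, rfl⟩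
  | (m+4) => exact ⟨m+3, m+2, lucas_add_two (m+2)⟩

lemma RepM_succ {m w : ℕ} (h : RepM m w) (hlt : m < w) : RepM (m+1) w := by
  obtain ⟨M, hc, hs, hl⟩ := h
  have hex : ∃ v ∈ M, 2 ≤ v := by
    by_contra hc2
    push_neg at hc2
    have : M.sum ≤ Multiset.card M • 1 := Multiset.sum_le_card_nsmul M 1 (by
      intro x hx; have := hc2 x hx; omega)
    simp at this
    omega
  obtain ⟨v, hv, hv2⟩ := hex
  obtain ⟨n, rfl⟩ := hl v hv
  obtain ⟨p, q, hpq⟩ := lucas_split hv2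
  have hM : M = lucas n ::ₘ M.erase (lucas n) := (Multiset.cons_erase hv).symm
  refine ⟨lucas p ::ₘ lucas q ::ₘ M.erase (lucas n), ?_, ?_, ?_⟩
  · rw [hM] at hc
    simp only [Multiset.card_cons] at hc ⊢
    omega
  · rw [hM] at hs
    simp only [Multiset.sum_cons] at hs ⊢
    omega
  · intro u hu
    rcases Multiset.mem_cons.mp hu with rfl | hu
    · exact ⟨p, rfl⟩
    rcases Multiset.mem_cons.mp hu with rfl | hu
    · exact ⟨q, rfl⟩
    · exact hl u (Multiset.mem_of_mem_erase hu)

lemma RepM_pad {w : ℕ} : ∀ m, Z w ≤ m → m ≤ w → RepM m w := by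
  intro m
  induction m with
  | zero =>
    intro h1 h2
    have : w = 0 := by have := Z_eq_zero_iff (y := w); omega
    subst this; exact RepM_zero
  | succ k ih =>
    intro h1 h2
    rcases Nat.eq_or_lt_of_le h1 with heq | hlt
    · rw [← heq]; exact RepM_of_Z w
    · exact RepM_succ (ih (by omega) (by omega)) (by omega)

lemma mem_Tset_iff {a x : ℕ} : x ∈ Tset a ↔ ∃ m w, x = m * lucas a + w ∧ RepM m w := by
  constructor
  · intro hx
    induction hx using AddSubmonoid.closure_induction with
    | mem y hy =>
      obtain ⟨n, rfl⟩ := hy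
      exact ⟨1, lucas n, by ring, RepM_lucas n⟩
    | zero => exact ⟨0, 0, by simp, RepM_zero⟩
    | add y z _ _ hy hz =>
      obtain ⟨m₁, w₁, rfl, h₁⟩ := hy
      obtain ⟨m₂, w₂, rfl, h₂⟩ := hz
      exact ⟨m₁ + m₂, w₁ + w₂, by ring, RepM_add h₁ h₂⟩
  · rintro ⟨m, w, rfl, M, hc, hs, hl⟩
    subst hc hs
    induction M using Multiset.induction with
    | empty => simp only [Multiset.card_zero, Multiset.sum_zero, Nat.zero_mul, Nat.add_zero]; exact zero_mem _
    | cons v M ih =>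
      have hv := hl v (Multiset.mem_cons_self v M)
      obtain ⟨n, hn⟩ := hv
      have hgen : lucas a + v ∈ Tset a := AddSubmonoid.subset_closure ⟨n, by rw [hn]⟩
      have hrest := ih (fun u hu => hl u (Multiset.mem_cons_of_mem hu))
      have heq : Multiset.card (v ::ₘ M) * lucas a + (v ::ₘ M).sum
          = (lucas a + v) + (Multiset.card M * lucas a + M.sum) := by
        simp only [Multiset.card_cons, Multiset.sum_cons]; ring
      rw [heq]
      exact add_mem hgen hrest

lemma mem_Tset_iff_Z {a x : ℕ} :
    x ∈ Tset a ↔ ∃ m w, x = m * lucas a + w ∧ Z w ≤ m ∧ m ≤ w := by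
  rw [mem_Tset_iff]
  constructor
  · rintro ⟨m, w, rfl, h⟩
    exact ⟨m, w, rfl, Z_le_of_RepM h, RepM_le h⟩
  · rintro ⟨m, w, rfl, h1, h2⟩
    exact ⟨m, w, rfl, RepM_pad m h1 h2⟩

lemma Z_two : Z 2 = 1 := Z_lucas 0

/-- decomposition lemma for lucas (a+k), k ≥ 3, strong form -/
lemma REM3 (n : ℕ) : ∀ k, ∃ q r, lucas (n+6+k) = q * lucas (n+3) + r ∧ 2 ≤ q ∧ Z r + 1 ≤ q := by
  have e0 : lucas (n+2) = lucas (n+1) + lucas n := lucas_add_two n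
  have e1 : lucas (n+3) = lucas (n+2) + lucas (n+1) := lucas_add_two (n+1)
  have e2 : lucas (n+4) = lucas (n+3) + lucas (n+2) := lucas_add_two (n+2)
  have e3 : lucas (n+5) = lucas (n+4) + lucas (n+3) := lucas_add_two (n+3)
  have e4 : lucas (n+6) = lucas (n+5) + lucas (n+4) := lucas_add_two (n+4)
  have e5 : lucas (n+7) = lucas (n+6) + lucas (n+5) := lucas_add_two (n+5)
  have base0 : lucas (n+6) = 4 * lucas (n+3) + lucas n := by omega
  have base1 : lucas (n+7) = 6 * lucas (n+3) + (lucas (n+2) + lucas n) := by omega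
  intro k
  induction k using Nat.strong_induction_on with
  | _ k ih =>
    match k with
    | 0 =>
      exact ⟨4, lucas n, base0, by omega, by rw [Z_lucas]; omega⟩
    | 1 =>
      refine ⟨6, lucas (n+2) + lucas n, base1, by omega, ?_⟩
      have := Z_add_le (lucas (n+2)) (lucas n)
      rw [Z_lucas, Z_lucas] at this
      omega
    | (k+2) =>
      obtain ⟨q1, r1, hq1, hq1b, hz1⟩ := ih k (by omega)
      obtain ⟨q2, r2, hq2, hq2b, hz2⟩ := ih (k+1) (by omega)
      have erec : lucas (n+6+(k+2)) = lucas (n+6+(k+1)) + lucas (n+6+k) := by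
        have := lucas_add_two (n+6+k)
        rwa [show n+6+k+2 = n+6+(k+2) by omega, show n+6+k+1 = n+6+(k+1) by omega] at this
      refine ⟨q1 + q2, r1 + r2, by rw [erec, hq1, hq2]; ring, by omega, ?_⟩
      have := Z_add_le r1 r2
      omega

lemma REM {a : ℕ} (ha : 3 ≤ a) {k : ℕ} (hk : 1 ≤ k) :
    ∃ q r, lucas (a+k) = q * lucas a + r ∧ 1 ≤ q ∧ Z r ≤ q + 1 := by
  obtain ⟨n, rfl⟩ : ∃ n, a = n + 3 := ⟨a - 3, by omega⟩
  have e1 : lucas (n+4) = lucas (n+3) + lucas (n+2) := lucas_add_two (n+2)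
  have e2 : lucas (n+5) = lucas (n+4) + lucas (n+3) := lucas_add_two (n+3)
  match k with
  | 1 =>
    refine ⟨1, lucas (n+2), ?_, le_refl 1, by rw [Z_lucas]; omega⟩
    show lucas (n+4) = 1 * lucas (n+3) + lucas (n+2)
    omega
  | 2 =>
    refine ⟨2, lucas (n+2), ?_, by omega, by rw [Z_lucas]; omega⟩
    show lucas (n+5) = 2 * lucas (n+3) + lucas (n+2)
    omega
  | (k+3) =>
    obtain ⟨q, r, h1, h2, h3⟩ := REM3 n k
    rw [show n+6+k = n+3+(k+3) by omega] at h1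
    exact ⟨q, r, h1, by omega, by omega⟩

/-- Main lower-bound lemma: subtracting j copies of lucas a lowers Z by at most j. -/
lemma Q_lemma {a : ℕ} (ha : 3 ≤ a) : ∀ j y, y < lucas a → Z y ≤ Z (j * lucas a + y) + j := by
  intro j
  induction j using Nat.strong_induction_on with
  | _ j ih =>
    intro y hy
    rcases Nat.eq_zero_or_pos j with rfl | hj
    · simp
    · set z := j * lucas a + y with hzdef
      have hLpos := lucas_pos a
      have hzL : lucas a ≤ z := by
        have : 1 * lucas a ≤ j * lucas a := Nat.mul_le_mul_right _ hj
        omega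
      have hz1 : 1 ≤ z := by omega
      set t := top z with htdef
      have h1 : ltil t ≤ z := ltil_top_le hz1
      have h2 : z < ltil (t+1) := lt_ltil_top_succ z
      have hta : a ≤ t := top_ge (by rwa [ltil_eq_lucas (by omega)])
      have hZz : Z z = 1 + Z (z - ltil t) := Z_eq_succ hz1
      rcases Nat.eq_or_lt_of_le hta with heqat | htgt
      · -- t = a
        have hlt : ltil t = lucas t := ltil_eq_lucas (by omega)
        have hEq : lucas t = lucas a := by rw [← heqat]
        have hmul : j * lucas a = (j-1) * lucas a + lucas a := by
          have h : (j-1) + 1 = j := by omega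
          calc j * lucas a = ((j-1)+1) * lucas a := by rw [h]
          _ = (j-1) * lucas a + lucas a := by ring
        have heq : z - ltil t = (j-1) * lucas a + y := by
          rw [hlt, hEq]; omega
        rw [heq] at hZz
        have := ih (j-1) (by omega) y hy
        omega
      · -- t > a
        obtain ⟨q, r, hqr, hq1, hZr⟩ := REM ha (k := t - a) (by omega)
        rw [show a + (t-a) = t by omega] at hqr
        have hltl : ltil t = lucas t := ltil_eq_lucas (by omega)
        have hqj : q ≤ j := by
          by_contra hc
          push_neg at hc
          have : (j+1) * lucas a ≤ q * lucas a := Nat.mul_le_mul_right _ hc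
          have : q * lucas a ≤ z := by omega
          have : z < (j+1) * lucas a := by rw [hzdef]; ring_nf; omega
          omega
        have hsub : z - q * lucas a = (z - ltil t) + r := by omega
        have hsub2 : z - q * lucas a = (j - q) * lucas a + y := by
          have h : (j-q) + q = j := by omega
          have : j * lucas a = (j-q) * lucas a + q * lucas a := by
            calc j * lucas a = ((j-q)+q) * lucas a := by rw [h]
            _ = (j-q) * lucas a + q * lucas a := by ring
          omega
        have hZsub : Z ((j-q) * lucas a + y) ≤ Z (z - ltil t) + Z r := by
          rw [← hsub2, hsub]; exact Z_add_le _ _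
        have hIH := ih (j - q) (by omega) y hy
        omega

/-- upper bound for Z below lucas -/
lemma Z_bound : ∀ n, ∀ y, y < lucas (n+2) → Z y ≤ (n+2)/2 := by
  intro n
  induction n using Nat.strong_induction_on with
  | _ n ih =>
    intro y hy
    match n with
    | 0 =>
      have h3 : y < 3 := by have e : lucas (0+2) = 3 := rfl; omega
      interval_cases y <;> decide
    | 1 =>
      have h4 : y < 4 := by have e : lucas (1+2) = 4 := rfl; omega
      interval_cases y <;> decide
    | (m+2) =>
      have hy' : y < lucas (m+4) := hy
      rcases Nat.lt_or_ge y (lucas (m+3)) with h | h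
      · have h5 : Z y ≤ (m+3)/2 := ih (m+1) (by omega) y h
        show Z y ≤ (m+4)/2
        omega
      · have hrec : lucas (m+4) = lucas (m+3) + lucas (m+2) := lucas_add_two (m+2)
        have hl : ltil (m+3) = lucas (m+3) := ltil_eq_lucas (by omega)
        have hl2 : ltil (m+4) = lucas (m+4) := ltil_eq_lucas (by omega)
        have hZ : Z y = 1 + Z (y - ltil (m+3)) :=
          Z_interval (k := m+3) (by omega) (by rw [show m+3+1 = m+4 by omega, hl2]; omega)
        rw [hl] at hZ
        have h6 : Z (y - lucas (m+3)) ≤ (m+2)/2 := ih m (by omega) (y - lucas (m+3)) (by omega)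
        show Z y ≤ (m+4)/2
        omega

/-- value of Z at lucas a - 1 -/
lemma Z_lucas_sub_one : ∀ n, Z (lucas (n+2) - 1) = (n+2)/2 := by
  intro n
  induction n using Nat.strong_induction_on with
  | _ n ih =>
    match n with
    | 0 => decide
    | 1 => decide
    | (m+2) =>
      have hrec : lucas (m+4) = lucas (m+3) + lucas (m+2) := lucas_add_two (m+2)
      have hmono : lucas (m+3) < lucas (m+4) := lucas_lt_succ (by omega)
      have hp2 := lucas_pos (m+2)
      have hp3 := lucas_pos (m+3)
      have hl : ltil (m+3) = lucas (m+3) := ltil_eq_lucas (by omega)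
      have hl2 : ltil (m+4) = lucas (m+4) := ltil_eq_lucas (by omega)
      have hZ : Z (lucas (m+4) - 1) = 1 + Z (lucas (m+4) - 1 - ltil (m+3)) :=
        Z_interval (k := m+3) (by omega) (by rw [show m+3+1 = m+4 by omega, hl2]; omega)
      rw [hl] at hZ
      have heq : lucas (m+4) - 1 - lucas (m+3) = lucas (m+2) - 1 := by omega
      rw [heq] at hZ
      have hih : Z (lucas (m+2) - 1) = (m+2)/2 := ih m (by omega)
      show Z (lucas (m+4) - 1) = (m+4)/2
      omega

lemma Z_half : ∀ y, Z y ≤ (y+1)/2 := by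
  intro y
  induction y using Nat.strong_induction_on with
  | _ y ih =>
    match y with
    | 0 => decide
    | 1 => decide
    | (m+2) =>
      have h1 : Z (m+2) ≤ Z m + Z 2 := by
        have := Z_add_le m 2; rwa [show m+2 = m+2 by rfl] at this
      rw [Z_two] at h1
      have := ih m (by omega)
      omega

lemma lucas_fib : ∀ n, lucas n + Nat.fib n = 2 * Nat.fib (n+1) := by
  intro n
  induction n using Nat.strong_induction_on with
  | _ n ih =>
    match n with
    | 0 => decide
    | 1 => decide
    | (m+2) =>
      have h1 : lucas m + Nat.fib m = 2 * Nat.fib (m+1) := ih m (by omega)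
      have h2 : lucas (m+1) + Nat.fib (m+1) = 2 * Nat.fib (m+2) := ih (m+1) (by omega)
      have hf : Nat.fib (m+2) = Nat.fib m + Nat.fib (m+1) := Nat.fib_add_two
      have hf2 : Nat.fib (m+3) = Nat.fib (m+1) + Nat.fib (m+2) := Nat.fib_add_two
      have hl : lucas (m+2) = lucas (m+1) + lucas m := lucas_add_two m
      show lucas (m+2) + Nat.fib (m+2) = 2 * Nat.fib (m+3)
      omega

lemma lucas_five_fib : ∀ n, lucas (n+2) + lucas n = 5 * Nat.fib (n+1) := by
  intro n
  induction n using Nat.strong_induction_on with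
  | _ n ih =>
    match n with
    | 0 => decide
    | 1 => decide
    | (m+2) =>
      have h1 : lucas (m+2) + lucas m = 5 * Nat.fib (m+1) := ih m (by omega)
      have h2 : lucas (m+3) + lucas (m+1) = 5 * Nat.fib (m+2) := ih (m+1) (by omega)
      have hf : Nat.fib (m+3) = Nat.fib (m+1) + Nat.fib (m+2) := Nat.fib_add_two
      have hl1 : lucas (m+4) = lucas (m+3) + lucas (m+2) := lucas_add_two (m+2)
      have hl2 : lucas (m+2) = lucas (m+1) + lucas m := lucas_add_two m
      show lucas (m+4) + lucas (m+2) = 5 * Nat.fib (m+3)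
      omega

/-- the main summation formula -/
lemma Z_sum : ∀ n, ∑ y ∈ Finset.range (lucas (n+2)), Z y = (n+2) * Nat.fib (n+1) := by
  intro n
  induction n using Nat.strong_induction_on with
  | _ n ih =>
    match n with
    | 0 => decide
    | 1 => decide
    | (m+2) =>
      show ∑ y ∈ Finset.range (lucas (m+4)), Z y = (m+4) * Nat.fib (m+3)
      have hrec : lucas (m+4) = lucas (m+3) + lucas (m+2) := lucas_add_two (m+2)
      have hmono : lucas (m+3) ≤ lucas (m+4) := by omega
      have hsplit := Finset.sum_Ico_consecutive Z (Nat.zero_le (lucas (m+3))) hmono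
      rw [← Finset.range_eq_Ico, ← Finset.range_eq_Ico] at hsplit
      have hIco : ∑ y ∈ Finset.Ico (lucas (m+3)) (lucas (m+4)), Z y
          = ∑ i ∈ Finset.range (lucas (m+2)), (1 + Z i) := by
        rw [Finset.sum_Ico_eq_sum_range]
        rw [show lucas (m+4) - lucas (m+3) = lucas (m+2) by omega]
        apply Finset.sum_congr rfl
        intro i hi
        rw [Finset.mem_range] at hi
        have hl : ltil (m+3) = lucas (m+3) := ltil_eq_lucas (by omega)
        have hl2 : ltil (m+4) = lucas (m+4) := ltil_eq_lucas (by omega)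
        have hZ : Z (lucas (m+3) + i) = 1 + Z (lucas (m+3) + i - ltil (m+3)) :=
          Z_interval (k := m+3) (by rw [hl]; omega)
            (by rw [show m+3+1 = m+4 by omega, hl2]; omega)
        rw [hl] at hZ
        rw [hZ, Nat.add_sub_cancel_left]
      have hconst : ∑ i ∈ Finset.range (lucas (m+2)), (1 + Z i)
          = lucas (m+2) + ∑ i ∈ Finset.range (lucas (m+2)), Z i := by
        rw [Finset.sum_add_distrib, Finset.sum_const, Finset.card_range, smul_eq_mul, mul_one]
      have h1 : ∑ y ∈ Finset.range (lucas (m+2)), Z y = (m+2) * Nat.fib (m+1) := ih m (by omega)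
      have h2 : ∑ y ∈ Finset.range (lucas (m+3)), Z y = (m+3) * Nat.fib (m+2) := ih (m+1) (by omega)
      have key : ∑ y ∈ Finset.range (lucas (m+4)), Z y
          = (m+3) * Nat.fib (m+2) + (lucas (m+2) + (m+2) * Nat.fib (m+1)) := by
        rw [← hsplit, hIco, hconst, h1, h2]
      rw [key]
      have hf : Nat.fib (m+3) = Nat.fib (m+1) + Nat.fib (m+2) := Nat.fib_add_two
      have hlf : lucas (m+2) + Nat.fib (m+2) = 2 * Nat.fib (m+3) := lucas_fib (m+2)
      set A := Nat.fib (m+1)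
      set B := Nat.fib (m+2)
      have hl : lucas (m+2) = 2*A + B := by omega
      rw [hl, hf]
      ring

def gapF (a : ℕ) : Finset ℕ :=
  (Finset.Icc 1 (lucas a) ∪ {2 * lucas a + 1}) ∪
  (Finset.range (lucas a)).biUnion
    (fun y => (Finset.Ico 1 (Z y)).image (fun m => m * lucas a + y))

lemma mem_gapF_iff {a x : ℕ} : x ∈ gapF a ↔
    (1 ≤ x ∧ x ≤ lucas a) ∨ x = 2 * lucas a + 1 ∨
    ∃ y, y < lucas a ∧ ∃ m, 1 ≤ m ∧ m < Z y ∧ x = m * lucas a + y := by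
  simp only [gapF, Finset.mem_union, Finset.mem_biUnion, Finset.mem_image, Finset.mem_Icc,
    Finset.mem_Ico, Finset.mem_range, Finset.mem_singleton]
  constructor
  · rintro ((h | h) | ⟨y, hy, m, ⟨hm1, hm2⟩, rfl⟩)
    · exact Or.inl h
    · exact Or.inr (Or.inl h)
    · exact Or.inr (Or.inr ⟨y, hy, m, hm1, hm2, rfl⟩)
  · rintro (h | h | ⟨y, hy, m, hm1, hm2, rfl⟩)
    · exact Or.inl (Or.inl h)
    · exact Or.inl (Or.inr h)
    · exact Or.inr ⟨y, hy, m, ⟨hm1, hm2⟩, rfl⟩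

lemma mul_split {p q v : ℕ} (h : q ≤ p) : p * v = (p - q) * v + q * v := by
  have h1 : (p - q) + q = p := by omega
  calc p * v = ((p-q)+q) * v := by rw [h1]
  _ = (p-q) * v + q * v := by ring

lemma Z_mul_lucas_le (d a : ℕ) : Z (d * lucas a) ≤ d := by
  induction d with
  | zero => simp [Z_zero]
  | succ k ih =>
    have h1 : (k+1) * lucas a = k * lucas a + lucas a := by ring
    rw [h1]
    have := Z_add_le (k * lucas a) (lucas a)
    rw [Z_lucas] at this
    omega

lemma lucas_ge_succ {a : ℕ} (ha : 3 ≤ a) : a + 1 ≤ lucas a := by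
  have h := ltil_lt_self_add_one a
  rwa [ltil_eq_lucas (by omega)] at h

lemma Z_one : Z 1 = 1 := by decide

lemma Z_L_add_one {a : ℕ} (ha : 3 ≤ a) : Z (lucas a + 1) = 2 := by
  have hl : ltil a = lucas a := ltil_eq_lucas (by omega)
  have hl2 : ltil (a+1) = lucas (a+1) := ltil_eq_lucas (by omega)
  have hrec : lucas (a+1) = lucas a + lucas (a-1) := by
    obtain ⟨n, rfl⟩ : ∃ n, a = n + 3 := ⟨a - 3, by omega⟩
    show lucas (n+4) = lucas (n+3) + lucas (n+3-1)
    rw [show n+3-1 = n+2 by omega]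
    exact lucas_add_two (n+2)
  have hl3 : 3 ≤ lucas (a-1) := by
    have h1 : lucas 2 ≤ lucas (a-1) := lucas_le_of_le (by omega) (by omega)
    have e : lucas 2 = 3 := rfl
    omega
  have hZ : Z (lucas a + 1) = 1 + Z (lucas a + 1 - ltil a) :=
    Z_interval (k := a) (by omega) (by rw [hl2]; omega)
  rw [hl] at hZ
  rw [hZ, show lucas a + 1 - lucas a = 1 by omega, Z_one]

/-- the main equivalence: gaps of Tset a are exactly gapF a -/
lemma gap_iff {a : ℕ} (ha : 3 ≤ a) (x : ℕ) : x ∉ Tset a ↔ x ∈ gapF a := by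
  have hLpos : 4 ≤ lucas a := by have := lucas_ge_succ ha; omega
  constructor
  · intro hnT
    by_contra hg
    apply hnT
    rw [mem_gapF_iff] at hg
    push_neg at hg
    obtain ⟨hg1, hg2, hg3⟩ := hg
    rcases Nat.eq_zero_or_pos x with rfl | hx
    · exact zero_mem _
    · have hx1 : lucas a < x := hg1 hx
      obtain ⟨m, y, hyL, hxe⟩ : ∃ m y, y < lucas a ∧ x = m * lucas a + y := by
        refine ⟨x / lucas a, x % lucas a, Nat.mod_lt _ (by omega), ?_⟩
        have h := Nat.div_add_mod x (lucas a)
        have h2 : lucas a * (x / lucas a) = (x / lucas a) * lucas a := Nat.mul_comm _ _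
        omega
      have hm1 : 1 ≤ m := by
        rcases Nat.eq_zero_or_pos m with rfl | h
        · rw [Nat.zero_mul, Nat.zero_add] at hxe; omega
        · exact h
      rcases Nat.lt_or_ge y m with hym | hym
      · -- y < m
        rcases Nat.lt_or_ge m 3 with hm3 | hm3
        · interval_cases m
          · omega
          · -- m = 2
            interval_cases y
            · rw [mem_Tset_iff_Z]
              refine ⟨1, lucas a, by omega, by rw [Z_lucas], by omega⟩
            · omega
        · -- m ≥ 3
          have hZy := Z_half y
          rcases Nat.lt_or_ge (lucas a + y + 1) m with hreg | hreg
          · -- regime B : m ≥ L + y + 2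
            have hZyc : Z y ≤ a / 2 := by
              obtain ⟨n, hn⟩ : ∃ n, a = n + 2 := ⟨a - 2, by omega⟩
              subst hn
              exact Z_bound n y hyL
            have hLa : a + 1 ≤ lucas a := lucas_ge_succ ha
            set c := a / 2 with hc
            set d := (m - c) / 2 with hd
            have hd1 : 1 ≤ d := by omega
            have hd2 : m - c - 1 ≤ 2 * d := by omega
            have hnl1 : (m - c - 1) * 4 ≤ (m - c - 1) * lucas a :=
              Nat.mul_le_mul_left _ (by omega)
            have hnl2 : (m - c - 1) * lucas a ≤ (2 * d) * lucas a :=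
              Nat.mul_le_mul_right _ hd2
            have hmul2 : (2*d) * lucas a = 2 * (d * lucas a) := by ring
            have hdL : m ≤ d * lucas a := by omega
            rw [mem_Tset_iff_Z]
            refine ⟨m - d, d * lucas a + y, ?_, ?_, ?_⟩
            · rw [hxe, mul_split (show d ≤ m by omega)]; omega
            · have h1 := Z_add_le (d * lucas a) y
              have h2 := Z_mul_lucas_le d a
              omega
            · omega
          · -- regime A : m ≤ L + y + 1
            rw [mem_Tset_iff_Z]
            refine ⟨m - 1, lucas a + y, ?_, ?_, ?_⟩
            · rw [hxe, mul_split (show 1 ≤ m by omega)]; omega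
            · have h1 := Z_add_le (lucas a) y
              have h2 : Z (lucas a) = 1 := Z_lucas a
              omega
            · omega
      · -- y ≥ m
        rcases Nat.lt_or_ge m (Z y) with hlt | hle
        · exact absurd hxe (hg3 y hyL m hm1 hlt)
        · rw [mem_Tset_iff_Z]
          exact ⟨m, y, hxe, hle, hym⟩
  · intro hg hT
    rw [mem_gapF_iff] at hg
    rw [mem_Tset_iff_Z] at hT
    obtain ⟨m', w, hxe, hZw, hmw⟩ := hT
    rcases hg with ⟨h1, h2⟩ | h | ⟨y, hyL, m, hm1, hmZ, hxeq⟩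
    · rcases Nat.eq_zero_or_pos m' with rfl | hm'
      · rw [Nat.zero_mul, Nat.zero_add] at hxe
        subst hxe
        have := Z_eq_zero_iff (y := x)
        omega
      · have : 1 * lucas a ≤ m' * lucas a := Nat.mul_le_mul_right _ hm'
        omega
    · have hm2 : m' ≤ 2 := by
        by_contra hc
        push_neg at hc
        have : 3 * lucas a ≤ m' * lucas a := Nat.mul_le_mul_right _ hc
        omega
      interval_cases m'
      · rw [Nat.zero_mul, Nat.zero_add] at hxe
        subst hxe
        have := Z_eq_zero_iff (y := x)
        omega
      · have hw : w = lucas a + 1 := by omega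
        rw [hw, Z_L_add_one ha] at hZw
        omega
      · omega
    · subst hxeq
      rcases Nat.eq_zero_or_pos m' with rfl | hm'
      · rw [Nat.zero_mul, Nat.zero_add] at hxe
        have hx0 : 1 * lucas a ≤ m * lucas a := Nat.mul_le_mul_right _ hm1
        have := Z_eq_zero_iff (y := w)
        omega
      · have hm'm : m' ≤ m := by
          by_contra hc
          push_neg at hc
          have h3 : (m+1) * lucas a ≤ m' * lucas a := Nat.mul_le_mul_right _ hc
          have h4 : (m+1) * lucas a = m * lucas a + lucas a := by ring
          omega
        have hweq : w = (m - m') * lucas a + y := by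
          have := mul_split (v := lucas a) hm'm
          omega
        have hQ := Q_lemma ha (m - m') y hyL
        rw [← hweq] at hQ
        have hZyy : Z y ≤ y := Z_le_self y
        omega

lemma sum_sub_one (N : ℕ) :
    ∑ y ∈ Finset.range N, (Z y - 1) + (N - 1) = ∑ y ∈ Finset.range N, Z y := by
  induction N with
  | zero => simp
  | succ k ih =>
    rw [Finset.sum_range_succ, Finset.sum_range_succ]
    rcases Nat.eq_zero_or_pos k with rfl | hk
    · simp [Z_zero]
    · have hZk : 1 ≤ Z k := by have := Z_eq_zero_iff (y := k); omega
      omega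

lemma gapF_card {a : ℕ} (ha : 3 ≤ a) :
    (gapF a).card = ∑ y ∈ Finset.range (lucas a), Z y + 2 := by
  have hLpos : 4 ≤ lucas a := by have := lucas_ge_succ ha; omega
  have hmod : ∀ mm yy, yy < lucas a → (mm * lucas a + yy) % lucas a = yy := by
    intro mm yy hy
    rw [Nat.add_comm, Nat.add_mul_mod_self_right]
    exact Nat.mod_eq_of_lt hy
  have hfam : ((Finset.range (lucas a)).biUnion
      (fun y => (Finset.Ico 1 (Z y)).image (fun m => m * lucas a + y))).card
      = ∑ y ∈ Finset.range (lucas a), (Z y - 1) := by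
    rw [Finset.card_biUnion]
    · apply Finset.sum_congr rfl
      intro y _
      rw [Finset.card_image_of_injective _ (fun m₁ m₂ h => by
        exact Nat.eq_of_mul_eq_mul_right (show 0 < lucas a by omega) (by omega))]
      simp [Nat.card_Ico]
    · intro y1 h1 y2 h2 hne
      simp only [Finset.mem_coe, Finset.coe_range, Set.mem_Iio, Finset.mem_range] at h1 h2
      refine Finset.disjoint_left.mpr ?_
      rintro u hu1 hu2
      simp only [Finset.mem_image, Finset.mem_Ico] at hu1 hu2
      obtain ⟨m1, _, rfl⟩ := hu1
      obtain ⟨m2, _, hh⟩ := hu2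
      apply hne
      have e1 := hmod m1 y1 h1
      have e2 := hmod m2 y2 h2
      rw [hh] at e2
      omega
  have hmemfam : ∀ u ∈ (Finset.range (lucas a)).biUnion
      (fun y => (Finset.Ico 1 (Z y)).image (fun m => m * lucas a + y)),
      lucas a + 1 ≤ u ∧ u ≠ 2 * lucas a + 1 := by
    intro u hu
    simp only [Finset.mem_biUnion, Finset.mem_image, Finset.mem_Ico, Finset.mem_range] at hu
    obtain ⟨y, hy, m, ⟨hm1, hm2⟩, rfl⟩ := hu
    have hy1 : 1 ≤ y := by
      rcases Nat.eq_zero_or_pos y with rfl | h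
      · rw [Z_zero] at hm2; omega
      · exact h
    constructor
    · have : 1 * lucas a ≤ m * lucas a := Nat.mul_le_mul_right _ hm1
      omega
    · intro heq
      have e1 := hmod m y hy
      have e2 := hmod 2 1 (by omega)
      rw [heq] at e1
      have hyeq : y = 1 := by omega
      subst hyeq
      rw [Z_one] at hm2
      omega
  rw [gapF]
  rw [Finset.card_union_of_disjoint, Finset.card_union_of_disjoint]
  · have hIcc : (Finset.Icc 1 (lucas a)).card = lucas a := by
      rw [Nat.card_Icc]; omega
    have hsing : ({2 * lucas a + 1} : Finset ℕ).card = 1 := Finset.card_singleton _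
    rw [hIcc, hsing, hfam]
    have := sum_sub_one (lucas a)
    omega
  · rw [Finset.disjoint_singleton_right, Finset.mem_Icc]
    omega
  · rw [Finset.disjoint_left]
    intro u hu1 hu2
    have := hmemfam u hu2
    rcases Finset.mem_union.mp hu1 with h | h
    · rw [Finset.mem_Icc] at h; omega
    · rw [Finset.mem_singleton] at h; omega


theorem genus_frobenius_T (a : ℕ) (ha : 3 ≤ a) :
    5 * {x : ℕ | x ∉ Tset a}.ncard = a * (lucas a + lucas (a - 2)) + 10 ∧
    IsGreatest {x : ℕ | x ∉ Tset a}
      (if a ≤ 5 then 2 * lucas a + 1 else (a - 1 + 1) / 2 * lucas a - 1) := by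
  have hLpos : 4 ≤ lucas a := by have := lucas_ge_succ ha; omega
  have hset : {x : ℕ | x ∉ Tset a} = ↑(gapF a) := by
    ext x
    rw [Set.mem_setOf_eq, gap_iff ha x, Finset.mem_coe]
  constructor
  · -- genus
    rw [hset, Set.ncard_coe_finset, gapF_card ha]
    obtain ⟨n, rfl⟩ : ∃ n, a = n + 2 := ⟨a - 2, by omega⟩
    rw [Z_sum n, show n+2-2 = n by omega]
    have h5 := lucas_five_fib n
    have : lucas (n+2) + lucas n = 5 * Nat.fib (n+1) := h5
    rw [this]
    ring
  · -- Frobenius number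
    by_cases h5 : a ≤ 5
    · rw [if_pos h5]
      constructor
      · rw [hset]
        show (2 * lucas a + 1) ∈ gapF a
        rw [mem_gapF_iff]
        exact Or.inr (Or.inl rfl)
      · intro x hx
        rw [hset, Finset.mem_coe, mem_gapF_iff] at hx
        rcases hx with ⟨h1, h2⟩ | h | ⟨y, hy, m, hm1, hm2, rfl⟩
        · omega
        · omega
        · -- m < Z y ≤ a/2 ≤ 2 → m = 1
          have hZy : Z y ≤ a / 2 := by
            obtain ⟨n, rfl⟩ : ∃ n, a = n + 2 := ⟨a - 2, by omega⟩
            exact Z_bound n y hy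
          have hm : m ≤ 1 := by omega
          have : m * lucas a ≤ 1 * lucas a := Nat.mul_le_mul_right _ hm
          omega
    · rw [if_neg h5]
      push_neg at h5
      rw [show a - 1 + 1 = a by omega]
      set c := a / 2 with hc
      have hc3 : 3 ≤ c := by omega
      have hZmax : Z (lucas a - 1) = c := by
        obtain ⟨n, hn⟩ : ∃ n, a = n + 2 := ⟨a - 2, by omega⟩
        subst hn
        exact Z_lucas_sub_one n
      have hsplit : c * lucas a = (c - 1) * lucas a + 1 * lucas a := mul_split (by omega)
      have hge : c * lucas a - 1 = (c - 1) * lucas a + (lucas a - 1) := by omega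
      constructor
      · rw [hset]
        show (c * lucas a - 1) ∈ gapF a
        rw [mem_gapF_iff]
        refine Or.inr (Or.inr ⟨lucas a - 1, by omega, c - 1, by omega, by omega, hge⟩)
      · intro x hx
        rw [hset, Finset.mem_coe, mem_gapF_iff] at hx
        have h3L : 3 * lucas a ≤ c * lucas a := Nat.mul_le_mul_right _ hc3
        rcases hx with ⟨h1, h2⟩ | h | ⟨y, hy, m, hm1, hm2, rfl⟩
        · omega
        · omega
        · have hZy : Z y ≤ c := by
            obtain ⟨n, hn⟩ : ∃ n, a = n + 2 := ⟨a - 2, by omega⟩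
            subst hn
            exact Z_bound n y hy
          have hm : m ≤ c - 1 := by omega
          have hmono : m * lucas a ≤ (c - 1) * lucas a := Nat.mul_le_mul_right _ hm
          omega
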